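/- Let σ ∈ (0,1], A ≥ 0, μ > 0 and α ≥ 1/(2μ), and set c = 1/(2μ). Let f(x) = (1/σ²) e^{-(x+A)/σ²} I₀(2√(xA)/σ²) be the noncentral chi-squared density and F(y) = ∫₀^y f(x) dx its CDF. Then the integral of f against the piecewise-linear function Z admits the exact closed form ∫₀^∞ f(x) Z(x) dx = F(α−c) + (1/2 + μα)·(F(α+c) − F(α−c)) − μ e^{-A/σ²} ∑_{i=0}^∞ (A^i σ^{2−2i}/(i!)²) · ( Γ(i+2, (α−c)/σ²) − Γ(i+2, (α+c)/σ²) ), where Γ(s, x) = ∫_x^∞ t^{s−1} e^{-t} dt is the upper incomplete gamma function (this is the exact, untruncated version of the paper's Theorem 1). -/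

import Mathlib

open MeasureTheory Real

noncomputable def besselI0 (z : ℝ) : ℝ := ∑' m : ℕ, (z / 2) ^ (2 * m) / ((Nat.factorial m : ℝ)) ^ 2

noncomputable def Zfun (μ α x : ℝ) : ℝ :=
  if x < α - 1 / (2 * μ) then 1
  else if x ≤ α + 1 / (2 * μ) then 1 / 2 - μ * (x - α)
  else 0

noncomputable def gammaUpper (s x : ℝ) : ℝ := ∫ t in Set.Ioi x, t ^ (s - 1) * Real.exp (-t)

lemma summable_aux (t : ℝ) : Summable (fun i : ℕ => t ^ i / ((Nat.factorial i : ℝ)) ^ 2) := by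
  have h0 : Summable (fun i : ℕ => |t| ^ i / ((Nat.factorial i : ℝ)) ^ 2) := by
    refine Summable.of_nonneg_of_le (fun i => by positivity) (fun i => ?_)
      (Real.summable_pow_div_factorial |t|)
    have h2 : (0:ℝ) < (Nat.factorial i : ℝ) := by
      exact_mod_cast Nat.factorial_pos i
    have h1 : (1:ℝ) ≤ (Nat.factorial i : ℝ) := by
      exact_mod_cast Nat.one_le_iff_ne_zero.mpr (Nat.factorial_pos i).ne'
    rw [div_le_div_iff₀ (by positivity) h2]
    have h3 : (Nat.factorial i : ℝ) ≤ ((Nat.factorial i : ℝ)) ^ 2 := by nlinarith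
    exact mul_le_mul_of_nonneg_left h3 (pow_nonneg (abs_nonneg t) i)
  exact Summable.of_abs (h0.congr fun i => by
    rw [abs_div, abs_pow, abs_pow, Nat.abs_cast])

lemma besselI0_series {y : ℝ} (hy : 0 ≤ y) (s : ℝ) :
    besselI0 (2 * Real.sqrt y / s) = ∑' i : ℕ, (y / s ^ 2) ^ i / ((Nat.factorial i : ℝ)) ^ 2 := by
  unfold besselI0
  refine tsum_congr fun m => ?_
  rw [show 2 * Real.sqrt y / s / 2 = Real.sqrt y / s by ring, pow_mul, div_pow,
    Real.sq_sqrt hy]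

lemma gammaUpper_diff (n : ℕ) {u v : ℝ} (hu : 0 ≤ u) (huv : u ≤ v) :
    gammaUpper ((n : ℝ) + 2) u - gammaUpper ((n : ℝ) + 2) v
      = ∫ t in Set.Ioc u v, t ^ (n + 1) * Real.exp (-t) := by
  have hfun : (fun t : ℝ => t ^ ((n : ℝ) + 2 - 1) * Real.exp (-t))
      = fun t => t ^ (n + 1) * Real.exp (-t) := by
    funext t
    rw [show (n : ℝ) + 2 - 1 = ((n + 1 : ℕ) : ℝ) by push_cast; ring, Real.rpow_natCast]
  have hint : IntegrableOn (fun t : ℝ => t ^ (n + 1) * Real.exp (-t)) (Set.Ioi u) := by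
    have h := Real.GammaIntegral_convergent (s := (n : ℝ) + 2) (by positivity)
    have h2 := h.mono_set (Set.Ioi_subset_Ioi hu)
    refine h2.congr_fun (fun x _ => ?_) measurableSet_Ioi
    dsimp only
    rw [show (n : ℝ) + 2 - 1 = ((n + 1 : ℕ) : ℝ) by push_cast; ring, Real.rpow_natCast,
      mul_comm]
  rw [gammaUpper, gammaUpper, hfun, ← Set.Ioc_union_Ioi_eq_Ioi huv,
    setIntegral_union Set.Ioc_disjoint_Ioi_same measurableSet_Ioi
      (hint.mono_set Set.Ioc_subset_Ioi_self)
      (hint.mono_set (Set.Ioi_subset_Ioi huv))]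
  ring

theorem stmt0 (σ A μ α : ℝ) (hσ : 0 < σ) (hσ1 : σ ≤ 1) (hA : 0 ≤ A) (hμ : 0 < μ)
    (hα : 1 / (2 * μ) ≤ α)
    (f : ℝ → ℝ) (hf : f = fun x => (1 / σ ^ 2) * Real.exp (-(x + A) / σ ^ 2) *
      besselI0 (2 * Real.sqrt (x * A) / σ ^ 2))
    (F : ℝ → ℝ) (hF : F = fun y => ∫ x in (0:ℝ)..y, f x) :
    (∫ x in Set.Ioi (0:ℝ), f x * Zfun μ α x)
      = F (α - 1 / (2 * μ))
        + (1 / 2 + μ * α) * (F (α + 1 / (2 * μ)) - F (α - 1 / (2 * μ)))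
        - μ * Real.exp (-A / σ ^ 2) *
          ∑' i : ℕ, (A ^ i * σ ^ ((2 : ℤ) - 2 * (i : ℤ)) / ((Nat.factorial i : ℝ)) ^ 2) *
            (gammaUpper ((i : ℝ) + 2) ((α - 1 / (2 * μ)) / σ ^ 2)
              - gammaUpper ((i : ℝ) + 2) ((α + 1 / (2 * μ)) / σ ^ 2)) := by
  have hs2 : (0:ℝ) < σ ^ 2 := by positivity
  have hc : 0 < 1 / (2 * μ) := by positivity
  set a := α - 1 / (2 * μ) with ha_def
  set b := α + 1 / (2 * μ) with hb_def
  have h0a : 0 ≤ a := by rw [ha_def]; linarith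
  have hab : a ≤ b := by rw [ha_def, hb_def]; linarith
  have h0b : 0 < b := by rw [hb_def]; linarith
  have hμc : μ * (1 / (2 * μ)) = 1 / 2 := by field_simp
  -- values of Zfun
  have hZ1 : ∀ x : ℝ, x ≤ a → Zfun μ α x = 1 := by
    intro x hx
    unfold Zfun
    rcases lt_or_eq_of_le hx with h | h
    · rw [if_pos h]
    · rw [if_neg (by rw [h]; exact lt_irrefl _), if_pos (by rw [h, ha_def]; linarith)]
      rw [h, ha_def]
      have : μ * (α - 1 / (2*μ) - α) = -(1/2) := by rw [show α - 1 / (2*μ) - α = -(1/(2*μ)) by ring]; rw [mul_neg, hμc]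
      rw [this]; ring
  have hZ2 : ∀ x : ℝ, a < x → x ≤ b → Zfun μ α x = 1 / 2 - μ * (x - α) := by
    intro x h1 h2
    unfold Zfun
    rw [if_neg (not_lt.2 h1.le), if_pos h2]
  have hZ3 : ∀ x : ℝ, b < x → Zfun μ α x = 0 := by
    intro x h1
    unfold Zfun
    rw [if_neg (not_lt.2 (le_of_lt (lt_of_le_of_lt hab h1))), if_neg (not_le.2 h1)]
  have hZabs : ∀ x : ℝ, ‖Zfun μ α x‖ ≤ 1 := by
    intro x
    rw [Real.norm_eq_abs]
    unfold Zfun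
    split_ifs with h1 h2
    · simp
    · push_neg at h1
      rw [abs_le]
      have e1 : μ * (x - α) ≤ 1/2 := by
        have := mul_le_mul_of_nonneg_left (show x - α ≤ 1/(2*μ) by linarith) hμ.le
        linarith [hμc]
      have e2 : -(1/2) ≤ μ * (x - α) := by
        have := mul_le_mul_of_nonneg_left (show -(1/(2*μ)) ≤ x - α by linarith) hμ.le
        rw [mul_neg, hμc] at this
        linarith
      constructor <;> linarith
    · simp
  have hZmeas : Measurable (Zfun μ α) := by
    unfold Zfun
    exact Measurable.ite (measurableSet_lt measurable_id measurable_const) measurable_const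
      (Measurable.ite (measurableSet_le measurable_id measurable_const)
        (by fun_prop) measurable_const)
  -- series representation of f
  set h : ℕ → ℝ → ℝ := fun i x =>
    (1/σ^2) * Real.exp (-(x+A)/σ^2) * ((x*A/(σ^2)^2)^i / ((Nat.factorial i : ℝ))^2)
    with hh_def
  set g : ℝ → ℝ := fun x => ∑' i : ℕ, h i x with hg_def
  have hf_eq : ∀ x : ℝ, 0 ≤ x → f x = g x := by
    intro x hx
    rw [hf, hg_def, hh_def]
    simp only
    rw [besselI0_series (mul_nonneg hx hA) (σ^2), ← tsum_mul_left]
  have hsum : ∀ x : ℝ, Summable (fun i => h i x) := by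
    intro x
    refine Summable.congr ((summable_aux (x*A/(σ^2)^2)).mul_left
      ((1/σ^2) * Real.exp (-(x+A)/σ^2))) (fun i => ?_)
    rw [hh_def]
  have hmeas_h : ∀ i, Measurable (h i) := by
    intro i
    rw [hh_def]
    fun_prop
  have hgmeas : Measurable g := by
    refine measurable_of_tendsto_metrizable
      (f := fun n x => ∑ i ∈ Finset.range n, h i x)
      (fun n => Finset.measurable_sum (Finset.range n) fun i _ => hmeas_h i) ?_
    rw [tendsto_pi_nhds]
    intro x
    exact (hsum x).hasSum.tendsto_sum_nat
  -- bound on g over Ioc 0 b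
  set M : ℝ := ∑' i : ℕ, (1/σ^2) * ((b*A/(σ^2)^2)^i / (Nat.factorial i : ℝ)) with hM_def
  have hMsum : Summable (fun i : ℕ => (1/σ^2) * ((b*A/(σ^2)^2)^i / (Nat.factorial i : ℝ))) :=
    (Real.summable_pow_div_factorial _).mul_left _
  have hg_nonneg : ∀ x ∈ Set.Ioc (0:ℝ) b, 0 ≤ g x := by
    intro x hx
    refine tsum_nonneg fun i => ?_
    rw [hh_def]
    have hxA : 0 ≤ x*A/(σ^2)^2 := div_nonneg (mul_nonneg hx.1.le hA) (by positivity)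
    positivity
  have hgle : ∀ x ∈ Set.Ioc (0:ℝ) b, g x ≤ M := by
    intro x hx
    refine Summable.tsum_le_tsum (fun i => ?_) (hsum x) hMsum
    rw [hh_def]
    simp only
    have hxA : 0 ≤ x*A/(σ^2)^2 := div_nonneg (mul_nonneg hx.1.le hA) (by positivity)
    have e1 : Real.exp (-(x+A)/σ^2) ≤ 1 := by
      rw [Real.exp_le_one_iff]
      apply div_nonpos_of_nonpos_of_nonneg <;> [linarith [hx.1]; positivity]
    have e2 : (x*A/(σ^2)^2)^i ≤ (b*A/(σ^2)^2)^i := by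
      apply pow_le_pow_left₀ hxA
      apply div_le_div_of_nonneg_right ?_ (by positivity)
      exact mul_le_mul_of_nonneg_right hx.2 hA
    have e3 : (Nat.factorial i : ℝ) ≤ ((Nat.factorial i : ℝ))^2 := by
      have h1 : (1:ℝ) ≤ (Nat.factorial i : ℝ) := by
        exact_mod_cast Nat.one_le_iff_ne_zero.mpr (Nat.factorial_pos i).ne'
      nlinarith
    calc (1/σ^2) * Real.exp (-(x+A)/σ^2) * ((x*A/(σ^2)^2)^i / ((Nat.factorial i : ℝ))^2)
        ≤ (1/σ^2) * 1 * ((b*A/(σ^2)^2)^i / (Nat.factorial i : ℝ)) := by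
          have hfac : (0:ℝ) < (Nat.factorial i : ℝ) := by
            exact_mod_cast Nat.factorial_pos i
          gcongr
      _ = (1/σ^2) * ((b*A/(σ^2)^2)^i / (Nat.factorial i : ℝ)) := by ring
  -- integrability
  have hIntg : IntegrableOn g (Set.Ioc 0 b) := by
    refine Measure.integrableOn_of_bounded (M := M) measure_Ioc_lt_top.ne
      hgmeas.aestronglyMeasurable ?_
    refine (ae_restrict_iff' measurableSet_Ioc).2 (ae_of_all _ fun x hx => ?_)
    rw [Real.norm_eq_abs, abs_of_nonneg (hg_nonneg x hx)]
    exact hgle x hx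
  have hIntxg : IntegrableOn (fun x => x * g x) (Set.Ioc 0 b) := by
    refine Measure.integrableOn_of_bounded (M := b * M) measure_Ioc_lt_top.ne
      (measurable_id.mul hgmeas).aestronglyMeasurable ?_
    refine (ae_restrict_iff' measurableSet_Ioc).2 (ae_of_all _ fun x hx => ?_)
    rw [Real.norm_eq_abs, abs_of_nonneg (mul_nonneg hx.1.le (hg_nonneg x hx))]
    exact mul_le_mul hx.2 (hgle x hx) (hg_nonneg x hx) h0b.le
  have hIntf : IntegrableOn f (Set.Ioc 0 b) :=
    hIntg.congr_fun (fun x hx => (hf_eq x hx.1.le).symm) measurableSet_Ioc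
  have hIntxf : IntegrableOn (fun x => x * f x) (Set.Ioc 0 b) :=
    hIntxg.congr_fun (fun x hx => by rw [hf_eq x hx.1.le]) measurableSet_Ioc
  have hIntfZ : IntegrableOn (fun x => f x * Zfun μ α x) (Set.Ioc 0 b) := by
    refine Integrable.mono hIntf
      (hIntf.aestronglyMeasurable.mul (hZmeas.aestronglyMeasurable)) (ae_of_all _ fun x => ?_)
    rw [norm_mul]
    calc ‖f x‖ * ‖Zfun μ α x‖ ≤ ‖f x‖ * 1 :=
          mul_le_mul_of_nonneg_left (hZabs x) (norm_nonneg _)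
      _ = ‖f x‖ := mul_one _
  -- splitting the integral
  have hIntfZIoi : IntegrableOn (fun x => f x * Zfun μ α x) (Set.Ioi b) :=
    (integrableOn_zero).congr_fun (fun x hx => by rw [hZ3 x hx, mul_zero]) measurableSet_Ioi
  have step1 : (∫ x in Set.Ioi (0:ℝ), f x * Zfun μ α x)
      = ∫ x in Set.Ioc 0 b, f x * Zfun μ α x := by
    rw [← Set.Ioc_union_Ioi_eq_Ioi h0b.le,
      setIntegral_union Set.Ioc_disjoint_Ioi_same measurableSet_Ioi hIntfZ hIntfZIoi]
    have : (∫ x in Set.Ioi b, f x * Zfun μ α x) = 0 := by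
      rw [setIntegral_congr_fun measurableSet_Ioi
        (fun x hx => by rw [hZ3 x hx, mul_zero] : Set.EqOn _ (fun _ => (0:ℝ)) _)]
      exact integral_zero _ _
    rw [this, add_zero]
  have step2 : (∫ x in Set.Ioc (0:ℝ) b, f x * Zfun μ α x)
      = (∫ x in Set.Ioc (0:ℝ) a, f x * Zfun μ α x)
        + ∫ x in Set.Ioc a b, f x * Zfun μ α x := by
    rw [← Set.Ioc_union_Ioc_eq_Ioc h0a hab,
      setIntegral_union (Set.Ioc_disjoint_Ioc_of_le le_rfl) measurableSet_Ioc
        (hIntfZ.mono_set (Set.Ioc_subset_Ioc_right hab))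
        (hIntfZ.mono_set (Set.Ioc_subset_Ioc_left h0a))]
  have step3 : (∫ x in Set.Ioc (0:ℝ) a, f x * Zfun μ α x) = F a := by
    rw [setIntegral_congr_fun measurableSet_Ioc
      (fun x hx => by rw [hZ1 x hx.2, mul_one] : Set.EqOn _ f _), hF]
    simp only
    rw [intervalIntegral.integral_of_le h0a]
  have step4 : (∫ x in Set.Ioc a b, f x * Zfun μ α x)
      = (1/2 + μ*α) * (∫ x in Set.Ioc a b, f x) - μ * ∫ x in Set.Ioc a b, x * f x := by
    rw [setIntegral_congr_fun measurableSet_Ioc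
      (fun x hx => by rw [hZ2 x hx.1 hx.2]; ring :
        Set.EqOn _ (fun x => (1/2 + μ*α) * f x - μ * (x * f x)) _)]
    rw [integral_sub (((hIntf.mono_set (Set.Ioc_subset_Ioc_left h0a))).const_mul _)
      (((hIntxf.mono_set (Set.Ioc_subset_Ioc_left h0a))).const_mul _),
      integral_const_mul, integral_const_mul]
  have step5 : (∫ x in Set.Ioc a b, f x) = F b - F a := by
    have h1 : F b = ∫ x in Set.Ioc (0:ℝ) b, f x := by
      rw [hF]; exact intervalIntegral.integral_of_le h0b.le
    have h2 : F a = ∫ x in Set.Ioc (0:ℝ) a, f x := by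
      rw [hF]; exact intervalIntegral.integral_of_le h0a
    have h3 : (∫ x in Set.Ioc (0:ℝ) b, f x)
        = (∫ x in Set.Ioc (0:ℝ) a, f x) + ∫ x in Set.Ioc a b, f x := by
      rw [← Set.Ioc_union_Ioc_eq_Ioc h0a hab,
        setIntegral_union (Set.Ioc_disjoint_Ioc_of_le le_rfl) measurableSet_Ioc
          (hIntf.mono_set (Set.Ioc_subset_Ioc_right hab))
          (hIntf.mono_set (Set.Ioc_subset_Ioc_left h0a))]
    rw [h1, h2, h3]; ring
  -- the core computation
  have hzpow : ∀ i : ℕ, σ ^ ((2:ℤ) - 2*(i:ℤ)) = σ^2 / σ^(2*i) := by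
    intro i
    rw [zpow_sub₀ (ne_of_gt hσ),
      show (2:ℤ) * (i:ℤ) = ((2*i : ℕ) : ℤ) by push_cast; ring, zpow_natCast,
      show ((2:ℤ)) = ((2:ℕ):ℤ) by norm_num, zpow_natCast]
    
  have Hcore : (∫ x in Set.Ioc a b, x * f x)
      = Real.exp (-A/σ^2) * ∑' i : ℕ,
          (A ^ i * σ ^ ((2 : ℤ) - 2 * (i : ℤ)) / ((Nat.factorial i : ℝ)) ^ 2) *
            (gammaUpper ((i : ℝ) + 2) (a / σ ^ 2)
              - gammaUpper ((i : ℝ) + 2) (b / σ ^ 2)) := by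
    have hdiv0 : 0 ≤ a / σ^2 := div_nonneg h0a hs2.le
    have hdivle : a / σ^2 ≤ b / σ^2 := by gcongr
    set K : ℕ → ℝ := fun i =>
      Real.exp (-A/σ^2) * (A^i / ((Nat.factorial i : ℝ))^2) * (σ^2 * ((σ^2)^2)^i)⁻¹ with hK_def
    set G : ℕ → ℝ → ℝ := fun i x => K i * (x^(i+1) * Real.exp (-x/σ^2)) with hG_def
    have hK0 : ∀ i, 0 ≤ K i := fun i => by rw [hK_def]; positivity
    have hpt : Set.EqOn (fun x => x * f x) (fun x => ∑' i : ℕ, G i x) (Set.Ioc a b) := by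
      intro x hx
      have hx0 : (0:ℝ) ≤ x := le_trans h0a hx.1.le
      simp only
      rw [hf_eq x hx0, hg_def]
      simp only
      rw [← tsum_mul_left]
      refine tsum_congr fun i => ?_
      rw [hh_def, hG_def, hK_def]
      simp only
      rw [show Real.exp (-(x+A)/σ^2) = Real.exp (-x/σ^2) * Real.exp (-A/σ^2) by
        rw [← Real.exp_add]; congr 1; ring]
      have hfac : ((Nat.factorial i : ℝ)) ≠ 0 := by positivity
      field_simp
      rw [div_pow, mul_assoc, div_mul_cancel₀ _ (pow_ne_zero _ (by positivity))]
      ring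
    have hGint : ∀ i, IntegrableOn (G i) (Set.Ioc a b) := by
      intro i
      apply Continuous.integrableOn_Ioc
      rw [hG_def]
      fun_prop
    have hGsum : Summable fun i => ∫ x in Set.Ioc a b, ‖G i x‖ := by
      have hub : Summable (fun i : ℕ =>
          (Real.exp (-A/σ^2) * b * (b - a) / σ^2) * ((A*b/(σ^2)^2)^i / ((Nat.factorial i:ℝ))^2)) :=
        (summable_aux _).mul_left _
      have hueq : ∀ i : ℕ, (Real.exp (-A/σ^2) * b * (b - a) / σ^2)
            * ((A*b/(σ^2)^2)^i / ((Nat.factorial i:ℝ))^2)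
          = K i * b^(i+1) * (b - a) := by
        intro i
        rw [hK_def]
        have hfac : ((Nat.factorial i : ℝ)) ≠ 0 := by positivity
        rw [div_pow, mul_pow]
        field_simp
        ring
      refine Summable.of_nonneg_of_le (fun i => integral_nonneg fun x => norm_nonneg _)
        (fun i => ?_) (hub.congr hueq)
      calc (∫ x in Set.Ioc a b, ‖G i x‖)
          ≤ ∫ _x in Set.Ioc a b, K i * b^(i+1) := by
            refine setIntegral_mono_on (hGint i).norm
              (integrableOn_const measure_Ioc_lt_top.ne) measurableSet_Ioc
              (fun x hx => ?_)
            have hx0 : (0:ℝ) ≤ x := le_trans h0a hx.1.le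
            rw [hG_def]
            simp only
            rw [Real.norm_eq_abs, abs_of_nonneg (mul_nonneg (hK0 i)
              (mul_nonneg (pow_nonneg hx0 _) (Real.exp_nonneg _)))]
            have e1 : x^(i+1) ≤ b^(i+1) := pow_le_pow_left₀ hx0 hx.2 _
            have e2 : Real.exp (-x/σ^2) ≤ 1 := by
              rw [Real.exp_le_one_iff]
              apply div_nonpos_of_nonpos_of_nonneg <;> [linarith; positivity]
            calc K i * (x^(i+1) * Real.exp (-x/σ^2))
                ≤ K i * (b^(i+1) * 1) := by
                  refine mul_le_mul_of_nonneg_left ?_ (hK0 i)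
                  exact mul_le_mul e1 e2 (Real.exp_nonneg _) (by positivity)
              _ = K i * b^(i+1) := by ring
        _ = K i * b^(i+1) * (b - a) := by
            rw [setIntegral_const, Real.volume_real_Ioc_of_le hab,
              smul_eq_mul]
            ring
    rw [setIntegral_congr_fun measurableSet_Ioc hpt,
      ← MeasureTheory.integral_tsum_of_summable_integral_norm hGint hGsum, ← tsum_mul_left]
    refine tsum_congr fun i => ?_
    have hsub : (∫ x in Set.Ioc a b, x^(i+1) * Real.exp (-x/σ^2))
        = (σ^2)^(i+2) * ∫ t in Set.Ioc (a/σ^2) (b/σ^2), t^(i+1) * Real.exp (-t) := by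
      rw [← intervalIntegral.integral_of_le hab, ← intervalIntegral.integral_of_le hdivle]
      have hcd := intervalIntegral.integral_comp_div (a := a) (b := b)
        (f := fun t => (σ^2 * t)^(i+1) * Real.exp (-t)) (ne_of_gt hs2)
      have hcanc : ∀ x : ℝ, σ^2 * (x/σ^2) = x := fun x => by field_simp
      simp only [hcanc] at hcd
      simp only [neg_div] at hcd ⊢
      rw [hcd, smul_eq_mul]
      simp_rw [mul_pow, mul_assoc]
      rw [intervalIntegral.integral_const_mul]
      ring
    rw [hG_def]
    simp only
    rw [integral_const_mul, hsub, ← gammaUpper_diff i hdiv0 hdivle, hzpow i, hK_def]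
    have hfac : ((Nat.factorial i : ℝ)) ≠ 0 := by positivity
    field_simp
    ring

  rw [step1, step2, step3, step4, step5, Hcore]
  ring
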